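/- For the general DDOP ū(t) = ∑_{n=−D}^{N−1+D} ā(t − (n+D)T − T_a/2) with ā even, supported in [−T_a/2, T_a/2], T_a < T, energy 1/(N+2D), and D a nonnegative integer: the energy of ū is 1 and its time dispersion satisfies ΔT² = (N+2D)∫t²|ā(t)|²dt + T²((N+2D)²−1)/12. -/

import Mathlib

open MeasureTheory Finset

lemma ddop_norm_sq_sum (s : Finset ℕ) (v : ℕ → ℂ)
    (h : ∀ i ∈ s, ∀ j ∈ s, i ≠ j → v i = 0 ∨ v j = 0) :
    ‖∑ i ∈ s, v i‖ ^ 2 = ∑ i ∈ s, ‖v i‖ ^ 2 := by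
  by_cases hk : ∃ k ∈ s, v k ≠ 0
  · obtain ⟨k, hks, hk0⟩ := hk
    have hz : ∀ i ∈ s, i ≠ k → v i = 0 := by
      intro i hi hik
      rcases h i hi k hks hik with h0 | h0
      · exact h0
      · exact absurd h0 hk0
    rw [Finset.sum_eq_single_of_mem k hks hz,
        Finset.sum_eq_single_of_mem k hks (fun i hi hik => by rw [hz i hi hik]; simp)]
  · push_neg at hk
    rw [Finset.sum_eq_zero hk, Finset.sum_eq_zero (fun i hi => by rw [hk i hi]; simp)]
    simp

lemma ddop_sum_range_cast (M : ℕ) :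
    ∑ n ∈ Finset.range M, ((n : ℝ)) = (M : ℝ) * ((M : ℝ) - 1) / 2 := by
  induction M with
  | zero => simp
  | succ m ih => rw [Finset.sum_range_succ, ih]; push_cast; ring

lemma ddop_sum_range_cast_sq (M : ℕ) :
    ∑ n ∈ Finset.range M, ((n : ℝ)) ^ 2
      = (M : ℝ) * ((M : ℝ) - 1) * (2 * (M : ℝ) - 1) / 6 := by
  induction M with
  | zero => simp
  | succ m ih => rw [Finset.sum_range_succ, ih]; push_cast; ring

theorem general_ddop_time_dispersion
    (N D : ℕ) (hN : 1 ≤ N) (T Ta : ℝ) (hTa : 0 < Ta) (hTaT : Ta < T)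
    (a : ℝ → ℂ)
    (ha_even : ∀ t : ℝ, a (-t) = a t)
    (ha_int : Integrable (fun t : ℝ => ‖a t‖ ^ 2))
    (ha2_int : Integrable (fun t : ℝ => t ^ 2 * ‖a t‖ ^ 2))
    (ha_supp : ∀ t : ℝ, Ta / 2 < |t| → a t = 0)
    (ha_energy : (∫ t : ℝ, ‖a t‖ ^ 2) = 1 / ((N : ℝ) + 2 * (D : ℝ)))
    (u : ℝ → ℂ)
    (hu : u = fun t => ∑ n ∈ Finset.range (N + 2 * D), a (t - (n : ℝ) * T - Ta / 2)) :
    (∫ t : ℝ, ‖u t‖ ^ 2) = 1 ∧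
    (∫ t : ℝ, (t - (T * (((N : ℝ) + 2 * (D : ℝ)) - 1) + Ta) / 2) ^ 2 * ‖u t‖ ^ 2)
      = ((N : ℝ) + 2 * (D : ℝ)) * (∫ t : ℝ, t ^ 2 * ‖a t‖ ^ 2)
        + T ^ 2 * (((N : ℝ) + 2 * (D : ℝ)) ^ 2 - 1) / 12 := by
  set M : ℕ := N + 2 * D with hM
  have hMr : (N : ℝ) + 2 * (D : ℝ) = (M : ℝ) := by push_cast [hM]; ring
  set Mr : ℝ := (M : ℝ) with hMrdef
  have hMpos : (0 : ℝ) < Mr := by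
    have h1 : 0 < M := lt_of_lt_of_le Nat.zero_lt_one (le_trans hN (Nat.le_add_right _ _))
    rw [hMrdef]
    exact_mod_cast h1
  have hMne : Mr ≠ 0 := ne_of_gt hMpos
  have hT : 0 < T := lt_trans hTa hTaT
  -- center of mass
  set μ : ℝ := (T * (Mr - 1) + Ta) / 2 with hμ
  set f : ℝ → ℝ := fun t => ‖a t‖ ^ 2 with hf
  set c : ℕ → ℝ := fun n => (n : ℝ) * T + Ta / 2 with hc
  -- nonvanishing implies small argument
  have hsmall : ∀ t : ℝ, a t ≠ 0 → |t| ≤ Ta / 2 := by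
    intro t ht
    by_contra h
    exact ht (ha_supp t (lt_of_not_ge h))
  -- disjoint supports
  have hsep : ∀ (t : ℝ), ∀ i ∈ Finset.range M, ∀ j ∈ Finset.range M, i ≠ j →
      a (t - c i) = 0 ∨ a (t - c j) = 0 := by
    intro t i _ j _ hij
    by_contra h
    push_neg at h
    obtain ⟨h1, h2⟩ := h
    have hi2 := hsmall _ h1
    have hj2 := hsmall _ h2
    have hdist : |c i - c j| ≤ Ta := by
      have : c i - c j = (t - c j) - (t - c i) := by ring
      rw [this]
      calc |(t - c j) - (t - c i)| ≤ |t - c j| + |t - c i| := abs_sub _ _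
        _ ≤ Ta / 2 + Ta / 2 := add_le_add hj2 hi2
        _ = Ta := by ring
    have hone : (1 : ℝ) ≤ |(i : ℝ) - (j : ℝ)| := by
      have hz : ((i : ℤ)) ≠ ((j : ℤ)) := by exact_mod_cast hij
      have h := Int.one_le_abs (sub_ne_zero.mpr hz)
      exact_mod_cast h
    have : T ≤ |c i - c j| := by
      have : c i - c j = ((i : ℝ) - (j : ℝ)) * T := by simp [hc]; ring
      rw [this, abs_mul, abs_of_pos hT]
      nlinarith
    linarith
  -- pointwise identity for the norm squared of u
  have hpt : ∀ t : ℝ, ‖u t‖ ^ 2 = ∑ n ∈ Finset.range M, f (t - c n) := by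
    intro t
    have : u t = ∑ n ∈ Finset.range M, a (t - c n) := by
      rw [hu]
      refine Finset.sum_congr rfl fun n _ => ?_
      congr 1
      simp [hc]; ring
    rw [this, ddop_norm_sq_sum _ _ (hsep t)]
  -- integrability of translates
  have hint_tr : ∀ d : ℝ, Integrable (fun t => f (t - d)) := fun d =>
    ha_int.comp_sub_right d
  -- t * f t is integrable
  have htf_meas : AEStronglyMeasurable (fun t : ℝ => t * f t) volume :=
    aestronglyMeasurable_id.mul ha_int.aestronglyMeasurable
  have htf : Integrable (fun t : ℝ => t * f t) := by
    refine Integrable.mono' (ha_int.const_mul (Ta / 2)) htf_meas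
      (Filter.Eventually.of_forall fun t => ?_)
    rcases le_or_gt |t| (Ta / 2) with h | h
    · have hf0 : 0 ≤ f t := by positivity
      rw [Real.norm_eq_abs, abs_mul, abs_of_nonneg hf0]
      exact mul_le_mul_of_nonneg_right h hf0
    · have : a t = 0 := ha_supp t h
      simp [hf, this]
  -- odd integral vanishes
  have hodd : (∫ t : ℝ, t * f t) = 0 := by
    have h1 : (∫ t : ℝ, (-t) * f (-t)) = ∫ t : ℝ, t * f t :=
      integral_neg_eq_self (fun t : ℝ => t * f t) volume
    have h2 : (fun t : ℝ => (-t) * f (-t)) = fun t : ℝ => -(t * f t) := by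
      funext t
      have : f (-t) = f t := by simp [hf, ha_even t]
      rw [this]; ring
    rw [h2, integral_neg] at h1
    linarith
  -- integrability of shifted second-moment integrands
  have hg_int : ∀ d : ℝ, Integrable (fun t : ℝ => (t + d) ^ 2 * f t) := by
    intro d
    have he : (fun t : ℝ => (t + d) ^ 2 * f t)
        = fun t : ℝ => t ^ 2 * f t + (2 * d) * (t * f t) + (d ^ 2) * f t := by
      funext t; ring
    rw [he]
    exact ((ha2_int.add (htf.const_mul (2 * d))).add (ha_int.const_mul (d ^ 2)))
  -- value of shifted second moments
  have hg_val : ∀ d : ℝ, (∫ t : ℝ, (t + d) ^ 2 * f t)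
      = (∫ t : ℝ, t ^ 2 * f t) + d ^ 2 / Mr := by
    intro d
    have he : (fun t : ℝ => (t + d) ^ 2 * f t)
        = fun t : ℝ => t ^ 2 * f t + ((2 * d) * (t * f t) + (d ^ 2) * f t) := by
      funext t; ring
    have hA : Integrable (fun t : ℝ => t ^ 2 * f t) := ha2_int
    have hB : Integrable (fun t : ℝ => 2 * d * (t * f t) + d ^ 2 * f t) :=
      (htf.const_mul (2 * d)).add (ha_int.const_mul (d ^ 2))
    have hB1 : Integrable (fun t : ℝ => 2 * d * (t * f t)) := htf.const_mul (2 * d)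
    have hB2 : Integrable (fun t : ℝ => d ^ 2 * f t) := ha_int.const_mul (d ^ 2)
    rw [he, integral_add hA hB, integral_add hB1 hB2,
        integral_const_mul, integral_const_mul, hodd]
    have : (∫ t : ℝ, f t) = 1 / Mr := by rw [hf]; rw [ha_energy, hMr]
    rw [this]
    ring
  constructor
  · -- energy
    have : (fun t : ℝ => ‖u t‖ ^ 2) = fun t => ∑ n ∈ Finset.range M, f (t - c n) := by
      funext t; exact hpt t
    rw [this, integral_finset_sum _ (fun n _ => hint_tr (c n))]
    have : ∀ n ∈ Finset.range M, (∫ t : ℝ, f (t - c n)) = 1 / Mr := by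
      intro n _
      rw [integral_sub_right_eq_self f (c n), hf, ha_energy, hMr]
    rw [Finset.sum_congr rfl this, Finset.sum_const, Finset.card_range]
    simp only [nsmul_eq_mul]
    field_simp
    exact hMrdef.symm
  · -- second moment
    have hfun : (fun t : ℝ => (t - (T * (((N : ℝ) + 2 * (D : ℝ)) - 1) + Ta) / 2) ^ 2 * ‖u t‖ ^ 2)
        = fun t => ∑ n ∈ Finset.range M, (t - μ) ^ 2 * f (t - c n) := by
      funext t
      rw [hpt t, Finset.mul_sum]
      congr 1
      rw [hμ, hMr]
    rw [hfun]
    have hterm_int : ∀ n, Integrable (fun t : ℝ => (t - μ) ^ 2 * f (t - c n)) := by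
      intro n
      have he : (fun t : ℝ => (t - μ) ^ 2 * f (t - c n))
          = fun t => (fun s : ℝ => (s + (c n - μ)) ^ 2 * f s) (t - c n) := by
        funext t; simp only []; ring_nf
      rw [he]
      exact (hg_int (c n - μ)).comp_sub_right (c n)
    rw [integral_finset_sum _ (fun n _ => hterm_int n)]
    have hterm_val : ∀ n ∈ Finset.range M, (∫ t : ℝ, (t - μ) ^ 2 * f (t - c n))
        = (∫ t : ℝ, t ^ 2 * f t) + (c n - μ) ^ 2 / Mr := by
      intro n _
      have he : (fun t : ℝ => (t - μ) ^ 2 * f (t - c n))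
          = fun t => (fun s : ℝ => (s + (c n - μ)) ^ 2 * f s) (t - c n) := by
        funext t; simp only []; ring_nf
      rw [he, integral_sub_right_eq_self (fun s : ℝ => (s + (c n - μ)) ^ 2 * f s) (c n)]
      exact hg_val (c n - μ)
    rw [Finset.sum_congr rfl hterm_val, Finset.sum_add_distrib, Finset.sum_const,
        Finset.card_range]
    have hcsum : ∑ n ∈ Finset.range M, (c n - μ) ^ 2 / Mr = T ^ 2 * (Mr ^ 2 - 1) / 12 := by
      have hexp : ∀ n ∈ Finset.range M, (c n - μ) ^ 2 / Mr
          = (T ^ 2 / Mr) * (n : ℝ) ^ 2 - (T ^ 2 * (Mr - 1) / Mr) * (n : ℝ)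
            + T ^ 2 * (Mr - 1) ^ 2 / (4 * Mr) := by
        intro n _
        have : c n - μ = T * ((n : ℝ) - (Mr - 1) / 2) := by
          simp only [hc, hμ]; ring
        rw [this]
        field_simp
        ring
      rw [Finset.sum_congr rfl hexp]
      rw [Finset.sum_add_distrib, Finset.sum_sub_distrib, ← Finset.mul_sum, ← Finset.mul_sum,
          ddop_sum_range_cast, ddop_sum_range_cast_sq, Finset.sum_const, Finset.card_range]
      simp only [nsmul_eq_mul, ← hMrdef]
      field_simp
      ring
    rw [hcsum, hMr]
    simp only [nsmul_eq_mul, ← hMrdef, hf]
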